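/- Let x : ℕ → S satisfy |f(s)·N − n(s,N)| ≤ 1 for all s ∈ S and all N ∈ ℕ, and let N ∈ ℕ satisfy N·f(s) ≥ 2 for all s ∈ S. Define q_N(s) = n(s,N)/N (note q_N(s) > 0 under these hypotheses). Then the Kullback–Leibler divergence of q_N relative to f satisfies Σ_{s∈S} f(s)·ln(f(s)/q_N(s)) ≤ (1/(2N²))·Σ_{s∈S} 1/f(s) + (1/N³)·Σ_{s∈S} 1/f(s)². -/

import Mathlib

open Finset

/-- The number of occurrences of the symbol `s` among the first `N` terms of `x`. -/
def nOcc {S : Type*} [DecidableEq S] (x : ℕ → S) (s : S) (N : ℕ) : ℕ :=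
  ((Finset.range N).filter fun k => x k = s).card


lemma sum_nOcc' {S : Type*} [Fintype S] [DecidableEq S] (x : ℕ → S) (N : ℕ) :
    ∑ s, ((Finset.range N).filter fun k => x k = s).card = N := by
  classical
  have h := Finset.card_eq_sum_card_fiberwise
    (s := Finset.range N) (t := (Finset.univ : Finset S)) (f := x)
    (fun k _ => Finset.mem_univ (x k))
  rw [Finset.card_range] at h
  exact h.symm

lemma log_lb (δ : ℝ) (h : |δ| ≤ 1/2) :
    -Real.log (1 + δ) ≤ -δ + δ^2/2 + |δ|^3 := by
  have hx : |(-δ)| < 1 := by rw [abs_neg]; linarith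
  have H := Real.abs_log_sub_add_sum_range_le hx 4
  have habs := (abs_le.mp H).1
  rw [abs_neg] at habs
  have hsum : (∑ i ∈ Finset.range 4, (-δ)^(i+1)/((i:ℝ)+1)) = -δ + δ^2/2 - δ^3/3 + δ^4/4 := by
    simp [Finset.sum_range_succ]
    ring
  rw [hsum] at habs
  have h1 : (1:ℝ) - (-δ) = 1 + δ := by ring
  rw [h1] at habs
  set a := |δ| with ha
  have ha0 : 0 ≤ a := abs_nonneg δ
  have hd1 : δ ≤ a := le_abs_self δ
  have hd2 : -a ≤ δ := neg_abs_le δ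
  have hsq : δ^2 = a^2 := (sq_abs δ).symm
  have hdiv : a^5 / (1 - a) ≤ 2 * a^5 := by
    rw [div_le_iff₀ (by linarith)]
    nlinarith [pow_nonneg ha0 5]
  have h3 : -a^3 ≤ δ^3 := by
    have := neg_abs_le (δ^3)
    rwa [abs_pow] at this
  have h4 : δ^4 = a^4 := by
    rw [← abs_pow, abs_of_nonneg (by positivity)]
  nlinarith [pow_nonneg ha0 3, pow_nonneg ha0 4, pow_nonneg ha0 5,
    mul_le_of_le_one_left (pow_nonneg ha0 3) (show a ≤ 1 by linarith)]

lemma pointwise (f n N : ℝ) (hf : 0 < f) (hN2 : 2 ≤ N * f)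
    (hd : |f * N - n| ≤ 1) :
    f * Real.log (f / (n / N)) ≤ -(n/N - f) + 1/(2*f*N^2) + 1/(f^2*N^3) := by
  obtain ⟨hd1, hd2⟩ := abs_le.mp hd
  have hfN : 0 < f * N := by nlinarith
  have hN0 : 0 < N := by nlinarith
  have hn0 : 0 < n := by nlinarith
  set d : ℝ := (n - f * N) / (f * N) with hdd
  have hdabs : |d| ≤ 1/2 := by
    rw [hdd, abs_div, abs_of_pos hfN, div_le_iff₀ hfN]
    rw [abs_sub_comm] at hd
    nlinarith [abs_le.mp hd]
  have hq : f / (n / N) = (1 + d)⁻¹ := by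
    rw [hdd]
    rw [show 1 + (n - f * N) / (f * N) = n / (f * N) by field_simp; ring]
    rw [div_div_eq_mul_div, inv_div]
  have hlog : Real.log (f / (n / N)) = -Real.log (1 + d) := by
    rw [hq, Real.log_inv]
  have key := log_lb d hdabs
  have hmul : f * (-Real.log (1 + d)) ≤ f * (-d + d^2/2 + |d|^3) :=
    mul_le_mul_of_nonneg_left key hf.le
  rw [hlog]
  refine hmul.trans ?_
  have e1 : f * d = n/N - f := by rw [hdd]; field_simp
  have e2 : f * (d^2/2) ≤ 1/(2*f*N^2) := by
    have hdsq : d^2 ≤ 1/(f*N)^2 := by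
      rw [hdd, div_pow]
      gcongr
      nlinarith
    have heq : f * ((1/(f*N)^2)/2) = 1/(2*f*N^2) := by field_simp
    nlinarith [hdsq]
  have e3 : f * |d|^3 ≤ 1/(f^2*N^3) := by
    have h3 : |d|^3 ≤ 1/(f*N)^3 := by
      rw [hdd, abs_div, abs_of_pos hfN, div_pow]
      gcongr
      apply pow_le_one₀ (abs_nonneg _)
      rw [abs_sub_comm]; exact hd
    have heq : f * (1/(f*N)^3) = 1/(f^2*N^3) := by field_simp
    nlinarith [h3]
  nlinarith [e1, e2, e3]

theorem stmt_10 {S : Type*} [Fintype S] [DecidableEq S] [Nonempty S]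
    (f : S → ℝ) (hf0 : ∀ s, 0 < f s) (hf1 : ∀ s, f s ≤ 1)
    (hsum : ∑ s, f s = 1)
    (x : ℕ → S)
    (hdisc : ∀ (s : S) (N : ℕ), |f s * (N : ℝ) - (nOcc x s N : ℝ)| ≤ 1)
    (N : ℕ) (hN : ∀ s : S, 2 ≤ (N : ℝ) * f s) :
    ∑ s, f s * Real.log (f s / ((nOcc x s N : ℝ) / (N : ℝ)))
      ≤ 1 / (2 * (N : ℝ) ^ 2) * ∑ s, 1 / f s
        + 1 / (N : ℝ) ^ 3 * ∑ s, 1 / f s ^ 2 := by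
  classical
  have s₀ := Classical.arbitrary S
  have hN0 : (0:ℝ) < N := by nlinarith [hN s₀, hf1 s₀, hf0 s₀, Nat.cast_nonneg (α := ℝ) N]
  have hsumn : ∑ s, ((nOcc x s N : ℝ)) = N := by
    rw [← Nat.cast_sum]
    norm_cast
    unfold nOcc
    exact sum_nOcc' x N
  have key : ∀ s ∈ Finset.univ, f s * Real.log (f s / ((nOcc x s N : ℝ) / N))
      ≤ -((nOcc x s N : ℝ)/N - f s) + 1/(2*f s*(N:ℝ)^2) + 1/(f s^2*(N:ℝ)^3) :=
    fun s _ => pointwise (f s) (nOcc x s N) N (hf0 s) (hN s) (hdisc s N)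
  refine (Finset.sum_le_sum key).trans ?_
  rw [Finset.sum_add_distrib, Finset.sum_add_distrib]
  have h1 : ∑ s, (-(((nOcc x s N:ℝ))/N - f s)) = 0 := by
    simp only [neg_sub]
    rw [Finset.sum_sub_distrib, hsum, ← Finset.sum_div, hsumn, div_self hN0.ne']
    ring
  have h2 : ∑ s, 1/(2*f s*(N:ℝ)^2) = 1 / (2 * (N:ℝ)^2) * ∑ s, 1 / f s := by
    rw [Finset.mul_sum]
    refine Finset.sum_congr rfl fun s _ => ?_
    field_simp
  have h3 : ∑ s, 1/(f s^2*(N:ℝ)^3) = 1 / (N:ℝ)^3 * ∑ s, 1 / f s^2 := by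
    rw [Finset.mul_sum]
    refine Finset.sum_congr rfl fun s _ => ?_
    field_simp
  rw [h1, h2, h3]
  linarith
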